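/- Let (X_t)_{t≥0} be a nonnegative real-valued stochastic process adapted to a filtration (F_t) with X_0 deterministic, satisfying E[X_t | F_{t-1}] ≤ β·X_{t-1} for all t ≥ 1, where 0 < β < 1. For g ∈ (0, X_0), let τ(g) := min{t ≥ 0 : X_t ≤ g}. Then E[τ(g)] ≤ 2·⌈log_β(g/(2X_0))⌉. -/

import Mathlib

open MeasureTheory ENNReal

/-- Analytic core: `1/(2(1-β)) ≤ ⌈L⌉` when `L > logb β (1/2)` and `L > 0`. -/
lemma aux_half (β : ℝ) (hβ0 : 0 < β) (hβ1 : β < 1) {L : ℝ}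
    (hL0 : 0 < L) (hLhalf : Real.logb β (1 / 2) < L) :
    1 / (2 * (1 - β)) ≤ (⌈L⌉ : ℝ) := by
  have h1β : (0:ℝ) < 1 - β := by linarith
  have hceil : L ≤ (⌈L⌉ : ℝ) := Int.le_ceil L
  have hc1 : (1 : ℝ) ≤ (⌈L⌉ : ℝ) := by exact_mod_cast Int.ceil_pos.mpr hL0
  have hlogβ : Real.log β < 0 := Real.log_neg hβ0 hβ1
  rcases le_or_gt β (1 / 2) with hb | hb
  · have h2 : 1 / (2 * (1 - β)) ≤ 1 := by
      rw [div_le_one (by linarith)]; linarith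
    linarith
  · -- logb β (1/2) = log 2 / (-log β)
    have hlb : Real.logb β (1 / 2) = Real.log 2 / (-Real.log β) := by
      rw [Real.logb, one_div, Real.log_inv]
      rw [div_neg_eq_neg_div, neg_div]
    have hneg2 : -Real.log 2 < Real.log β := by
      have h12 : Real.log (1 / 2) < Real.log β := Real.log_lt_log (by norm_num) hb
      rwa [one_div, Real.log_inv] at h12
    have hlog2pos : (0:ℝ) < Real.log 2 := Real.log_pos (by norm_num)
    have hlb1 : (1:ℝ) < Real.logb β (1 / 2) := by
      rw [hlb, lt_div_iff₀ (by linarith)]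
      linarith
    have hc2 : (2 : ℝ) ≤ (⌈L⌉ : ℝ) := by
      have : (1 : ℤ) < ⌈L⌉ := Int.lt_ceil.mpr (by exact_mod_cast hlb1.trans hLhalf)
      exact_mod_cast this
    rcases le_or_gt β (3 / 4) with hb2 | hb2
    · have h2 : 1 / (2 * (1 - β)) ≤ 2 := by
        rw [div_le_iff₀ (by linarith)]; linarith
      linarith
    · -- β > 3/4 : use -log β ≤ (1-β)/β and β·2·log2 ≥ 1
      have hlogle : -Real.log β ≤ (1 - β) / β := by
        have h := Real.log_le_sub_one_of_pos (x := β⁻¹) (by positivity)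
        rw [Real.log_inv] at h
        have hβ' : β⁻¹ - 1 = (1 - β) / β := by field_simp
        linarith [hβ'.symm ▸ h]
      have hlog2 : (0.6931471803 : ℝ) < Real.log 2 := Real.log_two_gt_d9
      have key : -Real.log β ≤ 2 * (1 - β) * Real.log 2 := by
        have h1 : (1 - β) / β ≤ (1 - β) * (4 / 3) := by
          rw [div_le_iff₀ hβ0]
          nlinarith
        have h2 : (1 - β) * (4 / 3) ≤ 2 * (1 - β) * Real.log 2 := by nlinarith
        linarith
      have h3 : 1 / (2 * (1 - β)) ≤ Real.log 2 / (-Real.log β) := by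
        rw [div_le_div_iff₀ (by linarith) (by linarith)]
        linarith
      calc 1 / (2 * (1 - β)) ≤ Real.log 2 / (-Real.log β) := h3
        _ = Real.logb β (1 / 2) := hlb.symm
        _ ≤ L := hLhalf.le
        _ ≤ (⌈L⌉ : ℝ) := hceil

/-- Drift lemma: if `(X_t)` is a nonnegative adapted process with deterministic start `x0`,
satisfying `E[X_t | F_{t-1}] ≤ β X_{t-1}` for `0 < β < 1`, and `τ(g)` is the first time the
process drops to level `g ∈ (0, x0)`, then `E[τ(g)] ≤ 2⌈log_β (g/(2 x0))⌉`. -/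
theorem stmt2 {Ω : Type*} {m0 : MeasurableSpace Ω} (μ : Measure Ω) [IsProbabilityMeasure μ]
    (ℱ : Filtration ℕ m0) (X : ℕ → Ω → ℝ) (β : ℝ) (hβ0 : 0 < β) (hβ1 : β < 1)
    (hadapted : Adapted ℱ X) (hint : ∀ t, Integrable (X t) μ)
    (hnonneg : ∀ t, (0 : Ω → ℝ) ≤ᵐ[μ] X t)
    (x0 : ℝ) (hX0 : ∀ ω, X 0 ω = x0)
    (hdrift : ∀ t : ℕ, μ[X (t + 1)|ℱ t] ≤ᵐ[μ] fun ω => β * X t ω)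
    (g : ℝ) (hg0 : 0 < g) (hgx : g < x0)
    (τ : Ω → ℝ≥0∞) (hτ : ∀ ω, τ ω = ⨅ (t : ℕ) (_ : X t ω ≤ g), (t : ℝ≥0∞)) :
    ∫⁻ ω, τ ω ∂μ ≤ ENNReal.ofReal (2 * (⌈Real.logb β (g / (2 * x0))⌉ : ℝ)) := by
  classical
  have hx0 : 0 < x0 := hg0.trans hgx
  set L := Real.logb β (g / (2 * x0)) with hLdef
  have harg : 0 < g / (2 * x0) := by positivity
  have harg2 : g / (2 * x0) < 1 / 2 := by
    rw [div_lt_div_iff₀ (by positivity) (by norm_num)]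
    linarith
  have hL0 : 0 < L := Real.logb_pos_of_base_lt_one hβ0 hβ1 harg (by linarith)
  have hLhalf : Real.logb β (1 / 2) < L :=
    (Real.logb_lt_logb_iff_of_base_lt_one hβ0 hβ1 (by norm_num) harg).mpr harg2
  -- the integer horizon
  set N : ℕ := (⌈L⌉).toNat with hNdef
  have hNcast : (N : ℝ) = (⌈L⌉ : ℝ) := by
    have h : (0:ℤ) ≤ ⌈L⌉ := (Int.ceil_pos.mpr hL0).le
    rw [hNdef]
    exact_mod_cast Int.toNat_of_nonneg h
  have hLN : L ≤ (N : ℝ) := hNcast ▸ Int.le_ceil L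
  have hN1 : 1 ≤ N := by
    have : (1:ℝ) ≤ (N:ℝ) := by rw [hNcast]; exact_mod_cast Int.ceil_pos.mpr hL0
    exact_mod_cast this
  have hβN : β ^ N ≤ g / (2 * x0) := by
    have h1 : β ^ (N : ℝ) ≤ β ^ L := Real.rpow_le_rpow_of_exponent_ge hβ0 hβ1.le hLN
    rw [Real.rpow_natCast] at h1
    rwa [Real.rpow_logb hβ0 hβ1.ne harg] at h1
  have hhalf : 1 / (2 * (1 - β)) ≤ (N : ℝ) := by
    rw [hNcast]; exact aux_half β hβ0 hβ1 hL0 hLhalf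
  -- expectations decay geometrically
  have hI : ∀ t, ∫ ω, X t ω ∂μ ≤ β ^ t * x0 := by
    intro t
    induction t with
    | zero => simp_rw [hX0]; simp
    | succ t ih =>
      have h1 : ∫ ω, X (t + 1) ω ∂μ = ∫ ω, (μ[X (t + 1)|ℱ t]) ω ∂μ :=
        (integral_condExp (ℱ.le t)).symm
      have h2 : ∫ ω, (μ[X (t + 1)|ℱ t]) ω ∂μ ≤ ∫ ω, β * X t ω ∂μ :=
        integral_mono_ae integrable_condExp ((hint t).const_mul β) (hdrift t)
      rw [integral_const_mul] at h2
      calc ∫ ω, X (t + 1) ω ∂μ ≤ β * ∫ ω, X t ω ∂μ := h1 ▸ h2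
        _ ≤ β * (β ^ t * x0) := mul_le_mul_of_nonneg_left ih hβ0.le
        _ = β ^ (t + 1) * x0 := by ring
  -- measurability
  have hmeasX : ∀ t, Measurable (X t) :=
    fun t => (hadapted t).mono (ℱ.le t) le_rfl
  have hset : ∀ t, MeasurableSet {ω | g < X t ω} :=
    fun t => measurableSet_lt measurable_const (hmeasX t)
  -- Markov inequality
  have hMarkov : ∀ t, μ {ω | g < X t ω} ≤ ENNReal.ofReal (β ^ t * x0 / g) := by
    intro t
    have hXof : ∫⁻ ω, ENNReal.ofReal (X t ω) ∂μ = ENNReal.ofReal (∫ ω, X t ω ∂μ) :=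
      (ofReal_integral_eq_lintegral_ofReal (hint t) (hnonneg t)).symm
    have hmk := mul_meas_ge_le_lintegral₀ (μ := μ)
      (f := fun ω => ENNReal.ofReal (X t ω))
      ((hmeasX t).ennreal_ofReal.aemeasurable) (ENNReal.ofReal g)
    have hsub : {ω | g < X t ω} ⊆ {ω | ENNReal.ofReal g ≤ ENNReal.ofReal (X t ω)} :=
      fun ω h => ENNReal.ofReal_le_ofReal (le_of_lt h)
    have h1 : ENNReal.ofReal g * μ {ω | g < X t ω} ≤ ENNReal.ofReal (β ^ t * x0) := by
      calc ENNReal.ofReal g * μ {ω | g < X t ω}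
          ≤ ENNReal.ofReal g * μ {ω | ENNReal.ofReal g ≤ ENNReal.ofReal (X t ω)} :=
            mul_le_mul_right (measure_mono hsub) _
        _ ≤ ∫⁻ ω, ENNReal.ofReal (X t ω) ∂μ := hmk
        _ = ENNReal.ofReal (∫ ω, X t ω ∂μ) := hXof
        _ ≤ ENNReal.ofReal (β ^ t * x0) := ENNReal.ofReal_le_ofReal (hI t)
    rw [ENNReal.ofReal_div_of_pos hg0]
    rw [ENNReal.le_div_iff_mul_le (Or.inl (ENNReal.ofReal_pos.mpr hg0).ne')
      (Or.inl ENNReal.ofReal_ne_top)]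
    rwa [mul_comm]
  -- pointwise bound on τ by a sum of indicators
  have hpt : ∀ ω, τ ω ≤ ∑' t : ℕ,
      Set.indicator {ω' | g < X t ω'} (fun _ => (1 : ℝ≥0∞)) ω := by
    intro ω
    by_cases h : ∃ t, X t ω ≤ g
    · have hτn : τ ω ≤ (Nat.find h : ℝ≥0∞) := by
        rw [hτ]
        exact iInf_le_of_le (Nat.find h) (iInf_le_of_le (Nat.find_spec h) le_rfl)
      refine hτn.trans ?_
      have hind : ∀ t ∈ Finset.range (Nat.find h),
          (1 : ℝ≥0∞) = Set.indicator {ω' | g < X t ω'} (fun _ => (1 : ℝ≥0∞)) ω := by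
        intro t ht
        have hmem : ω ∈ {ω' | g < X t ω'} :=
          lt_of_not_ge (Nat.find_min h (Finset.mem_range.mp ht))
        rw [Set.indicator_of_mem hmem]
      calc (Nat.find h : ℝ≥0∞) = ∑ _t ∈ Finset.range (Nat.find h), (1 : ℝ≥0∞) := by simp
        _ = ∑ t ∈ Finset.range (Nat.find h),
            Set.indicator {ω' | g < X t ω'} (fun _ => (1 : ℝ≥0∞)) ω := Finset.sum_congr rfl hind
        _ ≤ ∑' t : ℕ, Set.indicator {ω' | g < X t ω'} (fun _ => (1 : ℝ≥0∞)) ω :=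
            ENNReal.sum_le_tsum _
    · push_neg at h
      have htop : ∑' t : ℕ, Set.indicator {ω' | g < X t ω'} (fun _ => (1 : ℝ≥0∞)) ω = ⊤ := by
        have : ∀ t : ℕ, Set.indicator {ω' | g < X t ω'} (fun _ => (1 : ℝ≥0∞)) ω = 1 :=
          fun t => Set.indicator_of_mem (s := {ω' | g < X t ω'}) (h t) _
        rw [tsum_congr this]
        exact ENNReal.tsum_const_eq_top_of_ne_zero one_ne_zero
      rw [htop]; exact le_top
  -- bound the lintegral
  have hmain : ∫⁻ ω, τ ω ∂μ ≤ ∑' t : ℕ, min 1 (ENNReal.ofReal (β ^ t * x0 / g)) := by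
    calc ∫⁻ ω, τ ω ∂μ
        ≤ ∫⁻ ω, ∑' t : ℕ, Set.indicator {ω' | g < X t ω'} (fun _ => (1 : ℝ≥0∞)) ω ∂μ :=
          lintegral_mono hpt
      _ = ∑' t : ℕ, ∫⁻ ω, Set.indicator {ω' | g < X t ω'} (fun _ => (1 : ℝ≥0∞)) ω ∂μ :=
          lintegral_tsum (fun t => (measurable_const.indicator (hset t)).aemeasurable)
      _ = ∑' t : ℕ, μ {ω | g < X t ω} := by
          refine tsum_congr fun t => ?_
          exact lintegral_indicator_one (hset t)
      _ ≤ ∑' t : ℕ, min 1 (ENNReal.ofReal (β ^ t * x0 / g)) :=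
          ENNReal.tsum_le_tsum fun t => le_min prob_le_one (hMarkov t)
  -- bound the series
  have hβNhalf : β ^ N * x0 / g ≤ 1 / 2 := by
    rw [div_le_iff₀ hg0]
    calc β ^ N * x0 ≤ g / (2 * x0) * x0 := by
          exact mul_le_mul_of_nonneg_right hβN hx0.le
      _ = 1 / 2 * g := by field_simp
  have hsum : ∑' t : ℕ, min 1 (ENNReal.ofReal (β ^ t * x0 / g))
      ≤ ENNReal.ofReal (2 * (N : ℝ)) := by
    rw [← Summable.sum_add_tsum_nat_add' (f := fun t => min 1 (ENNReal.ofReal (β ^ t * x0 / g)))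
      (k := N) ENNReal.summable]
    have h1 : ∑ t ∈ Finset.range N, min 1 (ENNReal.ofReal (β ^ t * x0 / g))
        ≤ ENNReal.ofReal (N : ℝ) := by
      calc ∑ t ∈ Finset.range N, min 1 (ENNReal.ofReal (β ^ t * x0 / g))
          ≤ ∑ _t ∈ Finset.range N, (1 : ℝ≥0∞) := Finset.sum_le_sum fun t _ => min_le_left _ _
        _ = (N : ℝ≥0∞) := by simp
        _ = ENNReal.ofReal (N : ℝ) := (ENNReal.ofReal_natCast N).symm
    have h2 : ∑' k : ℕ, min 1 (ENNReal.ofReal (β ^ (k + N) * x0 / g))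
        ≤ ENNReal.ofReal (N : ℝ) := by
      have hterm : ∀ k : ℕ, min 1 (ENNReal.ofReal (β ^ (k + N) * x0 / g))
          ≤ ENNReal.ofReal (1 / 2) * (ENNReal.ofReal β) ^ k := by
        intro k
        refine (min_le_right _ _).trans ?_
        have heq : β ^ (k + N) * x0 / g = β ^ k * (β ^ N * x0 / g) := by
          rw [pow_add]; ring
        rw [heq]
        have : β ^ k * (β ^ N * x0 / g) ≤ β ^ k * (1 / 2) :=
          mul_le_mul_of_nonneg_left hβNhalf (by positivity)
        refine (ENNReal.ofReal_le_ofReal this).trans ?_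
        rw [ENNReal.ofReal_mul (by positivity), ENNReal.ofReal_pow hβ0.le]
        rw [mul_comm]
      calc ∑' k : ℕ, min 1 (ENNReal.ofReal (β ^ (k + N) * x0 / g))
          ≤ ∑' k : ℕ, ENNReal.ofReal (1 / 2) * (ENNReal.ofReal β) ^ k :=
            ENNReal.tsum_le_tsum hterm
        _ = ENNReal.ofReal (1 / 2) * (1 - ENNReal.ofReal β)⁻¹ := by
            rw [ENNReal.tsum_mul_left, ENNReal.tsum_geometric]
        _ = ENNReal.ofReal (1 / (2 * (1 - β))) := by
            rw [show (1 : ℝ≥0∞) - ENNReal.ofReal β = ENNReal.ofReal (1 - β) by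
              rw [ENNReal.ofReal_sub 1 hβ0.le, ENNReal.ofReal_one]]
            rw [← ENNReal.ofReal_inv_of_pos (by linarith), ← ENNReal.ofReal_mul (by norm_num)]
            congr 1
            field_simp
        _ ≤ ENNReal.ofReal (N : ℝ) := ENNReal.ofReal_le_ofReal hhalf
    calc ∑ t ∈ Finset.range N, min 1 (ENNReal.ofReal (β ^ t * x0 / g))
          + ∑' k : ℕ, min 1 (ENNReal.ofReal (β ^ (k + N) * x0 / g))
        ≤ ENNReal.ofReal (N : ℝ) + ENNReal.ofReal (N : ℝ) := add_le_add h1 h2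
      _ = ENNReal.ofReal (2 * (N : ℝ)) := by
          rw [← ENNReal.ofReal_add (by positivity) (by positivity)]
          congr 1; ring
  calc ∫⁻ ω, τ ω ∂μ ≤ ∑' t : ℕ, min 1 (ENNReal.ofReal (β ^ t * x0 / g)) := hmain
    _ ≤ ENNReal.ofReal (2 * (N : ℝ)) := hsum
    _ = ENNReal.ofReal (2 * (⌈L⌉ : ℝ)) := by rw [hNcast]
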